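/- The matrix M has at least one real eigenvalue, and if λ_max denotes the largest real eigenvalue of M, then every global minimizer y of f (i.e. every y with f(y) ≤ f(z) for all z ∈ ℝⁿ) satisfies ‖y‖² = λ_max. -/

import Mathlib

open Matrix

noncomputable def Mmat {n : ℕ} (D b : Fin n → ℝ) :
    Matrix (Fin n ⊕ Fin n ⊕ Unit) (Fin n ⊕ Fin n ⊕ Unit) ℝ :=
  Matrix.of fun i j =>
    match i, j with
    | Sum.inl i, Sum.inl j => if i = j then D i else 0
    | Sum.inl i, Sum.inr (Sum.inl j) => if i = j then -b i else 0
    | Sum.inl _, Sum.inr (Sum.inr _) => 0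
    | Sum.inr (Sum.inl _), Sum.inl _ => 0
    | Sum.inr (Sum.inl i), Sum.inr (Sum.inl j) => if i = j then D i else 0
    | Sum.inr (Sum.inl i), Sum.inr (Sum.inr _) => -b i
    | Sum.inr (Sum.inr _), Sum.inl _ => 1
    | Sum.inr (Sum.inr _), Sum.inr _ => 0

/-- `f(y) = (1/4)‖y‖⁴ − (1/2) yᵀ D y + bᵀ y`. -/
noncomputable def fD {n : ℕ} (D b : Fin n → ℝ) (y : Fin n → ℝ) : ℝ :=
  (1/4) * (y ⬝ᵥ y)^2 - (1/2) * (y ⬝ᵥ (Matrix.diagonal D *ᵥ y)) + b ⬝ᵥ y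

open Finset Polynomial Filter


section aux
variable {n : ℕ}

/-- linear coefficient of a nonneg quartic (no constant term) is zero: nonneg half -/
lemma lin_coeff_nonneg {a c2 c3 c4 : ℝ}
    (h : ∀ t : ℝ, 0 ≤ a*t + c2*t^2 + c3*t^3 + c4*t^4) : 0 ≤ a := by
  have cont : Filter.Tendsto (fun t : ℝ => a + c2*t + c3*t^2 + c4*t^3)
      (nhdsWithin 0 (Set.Ioi 0)) (nhds a) := by
    have hc : Continuous (fun t : ℝ => a + c2*t + c3*t^2 + c4*t^3) := by fun_prop
    have h2 := (hc.tendsto 0).mono_left (nhdsWithin_le_nhds (s := Set.Ioi (0:ℝ)))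
    simpa using h2
  refine ge_of_tendsto cont ?_
  filter_upwards [self_mem_nhdsWithin] with t ht
  have h0 : (0:ℝ) < t := ht
  have h2 : 0 ≤ t * (a + c2*t + c3*t^2 + c4*t^3) := by nlinarith [h t]
  nlinarith [h2, h0]

lemma lin_coeff_zero {a c2 c3 c4 : ℝ}
    (h : ∀ t : ℝ, 0 ≤ a*t + c2*t^2 + c3*t^3 + c4*t^4) : a = 0 := by
  have h1 : 0 ≤ a := lin_coeff_nonneg h
  have h2 : 0 ≤ -a := by
    apply lin_coeff_nonneg (c2 := c2) (c3 := -c3) (c4 := c4)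
    intro t
    have := h (-t)
    nlinarith [h (-t)]
  linarith

lemma quad_coeff_nonneg {c e : ℝ} (he : 0 < e)
    (h : ∀ t : ℝ, 0 ≤ c*t^2 + e*t^4) : 0 ≤ c := by
  by_contra hc
  push_neg at hc
  have ht := h (Real.sqrt (-c/(2*e)))
  have hs : Real.sqrt (-c/(2*e)) ^ 2 = -c/(2*e) := Real.sq_sqrt (by rw [le_div_iff₀ (by positivity)]; nlinarith)
  have h4 : Real.sqrt (-c/(2*e)) ^ 4 = (-c/(2*e))^2 := by
    rw [show (Real.sqrt (-c/(2*e)))^4 = ((Real.sqrt (-c/(2*e)))^2)^2 by ring, hs]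
  rw [hs, h4] at ht
  have he' : 0 < e := he
  rw [div_pow] at ht
  have hc2 : 0 < c^2 := by nlinarith
  have h4e : (0:ℝ) < 4*e^2 := by positivity
  have ht2 : 0 ≤ (c * (-c / (2 * e)) + e * ((-c) ^ 2 / (2 * e) ^ 2)) * (4*e^2) :=
    mul_nonneg ht h4e.le
  have hee : e ≠ 0 := he.ne'
  have : (c * (-c / (2 * e)) + e * ((-c) ^ 2 / (2 * e) ^ 2)) * (4*e^2) = -(e * c^2) := by
    field_simp; ring
  rw [this] at ht2
  nlinarith [mul_pos he hc2]

lemma odd_root {p : ℝ[X]} (hm : p.Monic) (ho : Odd p.natDegree) : ∃ x, p.IsRoot x := by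
  have hnd : p.natDegree ≠ 0 := by
    rintro h; rw [h] at ho; simpa using ho
  have hdeg : 0 < p.degree := natDegree_pos_iff_degree_pos.mp (Nat.pos_of_ne_zero hnd)
  have htop : Tendsto (fun x => eval x p) atTop atTop :=
    p.tendsto_atTop_of_leadingCoeff_nonneg hdeg (by simp [hm.leadingCoeff])
  set q := p.comp (-X) with hq
  have hqnd : q.natDegree = p.natDegree := by
    rw [hq, natDegree_comp]; simp
  have hqlc : q.leadingCoeff = -1 := by
    rw [hq, leadingCoeff_comp (by simp)]
    simp [hm.leadingCoeff, ho.neg_one_pow]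
  have hqdeg : 0 < q.degree := by
    apply natDegree_pos_iff_degree_pos.mp
    rw [hqnd]; exact Nat.pos_of_ne_zero hnd
  have hbot : Tendsto (fun x => eval x q) atTop atBot :=
    q.tendsto_atBot_of_leadingCoeff_nonpos hqdeg (by rw [hqlc]; norm_num)
  obtain ⟨x1, hx1⟩ := (htop.eventually (eventually_gt_atTop 0)).exists
  obtain ⟨x2, hx2⟩ := (hbot.eventually (eventually_lt_atBot 0)).exists
  have hx2' : eval (-x2) p < 0 := by
    have : eval x2 q = eval (-x2) p := by rw [hq]; simp [eval_comp]
    linarith [hx2, this.symm.le]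
  have hcont : Continuous (fun x => eval x p) := p.continuous
  have := intermediate_value_univ (-x2) x1 hcont
  have h0 : (0:ℝ) ∈ Set.Icc (eval (-x2) p) (eval x1 p) := ⟨hx2'.le, hx1.le⟩
  obtain ⟨c, hc⟩ := this h0
  exact ⟨c, hc⟩

end aux

section core
variable {n : ℕ} (D b : Fin n → ℝ)

def IsStat (y : Fin n → ℝ) : Prop :=
  ∀ i, (∑ j, y j * y j) * y i - D i * y i + b i = 0

lemma fD_eq (y : Fin n → ℝ) :
    fD D b y = (1/4) * (∑ i, y i * y i)^2
      - (1/2) * ∑ i, D i * (y i * y i) + ∑ i, b i * y i := by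
  simp only [fD, dotProduct, mulVec_diagonal]
  rw [show (∑ i, y i * (D i * y i)) = ∑ i, D i * (y i * y i) from
    Finset.sum_congr rfl fun i _ => by ring]

lemma key_id {y : Fin n → ℝ} (hy : IsStat D b y) (z : Fin n → ℝ) :
    fD D b z - fD D b y
      = (1/4) * ((∑ i, z i * z i) - ∑ i, y i * y i)^2
        + (1/2) * ∑ i, ((∑ j, y j * y j) - D i) * (z i - y i)^2 := by
  set L := ∑ j, y j * y j with hL
  have hb : ∀ i, b i = D i * y i - L * y i := fun i => by
    have := hy i; linarith
  have hbz : ∑ i, b i * z i = (∑ i, D i * (y i * z i)) - L * ∑ i, y i * z i := by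
    rw [Finset.mul_sum, ← Finset.sum_sub_distrib]
    exact Finset.sum_congr rfl fun i _ => by rw [hb i]; ring
  have hby : ∑ i, b i * y i = (∑ i, D i * (y i * y i)) - L * L := by
    have : ∑ i, b i * y i = (∑ i, D i * (y i * y i)) - L * ∑ i, y i * y i := by
      rw [Finset.mul_sum, ← Finset.sum_sub_distrib]
      exact Finset.sum_congr rfl fun i _ => by rw [hb i]; ring
    rw [this, ← hL]
  have hsplit : ∑ i, (L - D i) * (z i - y i)^2
      = L * (∑ i, z i * z i) - (2*L) * (∑ i, y i * z i) + L * L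
        - (∑ i, D i * (z i * z i)) + 2*(∑ i, D i * (y i * z i))
        - ∑ i, D i * (y i * y i) := by
    have e1 : ∀ i, (L - D i) * (z i - y i)^2
        = (L * (z i * z i) - (2*L) * (y i * z i) + L * (y i * y i))
          - D i * (z i * z i) + 2*(D i * (y i * z i)) - D i * (y i * y i) :=
      fun i => by ring
    rw [Finset.sum_congr rfl fun i _ => e1 i]
    simp only [Finset.sum_sub_distrib, Finset.sum_add_distrib, ← Finset.mul_sum]
    rw [← hL]
  rw [fD_eq, fD_eq, hbz, hby, hsplit, ← hL]
  ring

end core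

section core2
variable {n : ℕ} (D b : Fin n → ℝ)

lemma sum_bump (g : Fin n → ℝ) (i : Fin n) (c : ℝ) :
    ∑ j, (g j + if j = i then c else 0) = (∑ j, g j) + c := by
  rw [Finset.sum_add_distrib]
  simp [Finset.sum_ite_eq']

lemma stat_of_min {y : Fin n → ℝ} (hmin : ∀ z, fD D b y ≤ fD D b z) :
    IsStat D b y := by
  intro i
  set L := ∑ j, y j * y j with hL
  set z : ℝ → Fin n → ℝ := fun t j => y j + (if j = i then t else 0) with hz
  have s1 : ∀ t, ∑ j, z t j * z t j = L + (2 * y i * t + t * t) := by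
    intro t
    have : ∀ j, z t j * z t j = y j * y j + (if j = i then 2 * y i * t + t * t else 0) := by
      intro j; by_cases h : j = i <;> simp [hz, h] <;> ring
    rw [Finset.sum_congr rfl fun j _ => this j, sum_bump]
  have s2 : ∀ t, ∑ j, D j * (z t j * z t j)
      = (∑ j, D j * (y j * y j)) + (D i * (2 * y i * t + t * t)) := by
    intro t
    have : ∀ j, D j * (z t j * z t j)
        = D j * (y j * y j) + (if j = i then D i * (2 * y i * t + t * t) else 0) := by
      intro j; by_cases h : j = i <;> simp [hz, h] <;> ring
    rw [Finset.sum_congr rfl fun j _ => this j, sum_bump]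
  have s3 : ∀ t, ∑ j, b j * z t j = (∑ j, b j * y j) + b i * t := by
    intro t
    have : ∀ j, b j * z t j = b j * y j + (if j = i then b i * t else 0) := by
      intro j; by_cases h : j = i <;> simp [hz, h] <;> ring
    rw [Finset.sum_congr rfl fun j _ => this j, sum_bump]
  have expand : ∀ t, fD D b (z t) - fD D b y
      = (L * y i - D i * y i + b i) * t + (L/2 + y i^2 - D i/2) * t^2
        + (y i) * t^3 + (1/4) * t^4 := by
    intro t
    rw [fD_eq, fD_eq, s1 t, s2 t, s3 t, ← hL]
    ring
  have hcoef := lin_coeff_zero (a := L * y i - D i * y i + b i)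
    (c2 := L/2 + y i^2 - D i/2) (c3 := y i) (c4 := 1/4)
    (fun t => by rw [← expand t]; linarith [hmin (z t)])
  linarith [hcoef]

/-- if `y i = 0` at a global min, then `D i ≤ ‖y‖²`. -/
lemma lemA0 {y : Fin n → ℝ} (hmin : ∀ z, fD D b y ≤ fD D b z)
    (hy : IsStat D b y) (i : Fin n) (hyi : y i = 0) :
    D i ≤ ∑ j, y j * y j := by
  set L := ∑ j, y j * y j with hL
  set z : ℝ → Fin n → ℝ := fun t j => y j + (if j = i then t else 0) with hz
  have s1 : ∀ t, ∑ j, z t j * z t j = L + t * t := by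
    intro t
    have : ∀ j, z t j * z t j = y j * y j + (if j = i then t * t else 0) := by
      intro j; by_cases h : j = i <;> simp [hz, h, hyi] <;> ring
    rw [Finset.sum_congr rfl fun j _ => this j, sum_bump]
  have s2 : ∀ t, ∑ j, (L - D j) * (z t j - y j)^2 = (L - D i) * t^2 := by
    intro t
    have : ∀ j, (L - D j) * (z t j - y j)^2
        = 0 + (if j = i then (L - D i) * t^2 else 0) := by
      intro j; by_cases h : j = i <;> simp [hz, h] <;> ring
    rw [Finset.sum_congr rfl fun j _ => this j, sum_bump]
    simp
  have hq : ∀ t : ℝ, 0 ≤ ((L - D i)/2) * t^2 + (1/4) * t^4 := by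
    intro t
    have hk := key_id D b hy (z t)
    rw [s1 t, s2 t, ← hL] at hk
    have := hmin (z t)
    nlinarith [hk, hmin (z t)]
  have := quad_coeff_nonneg (by norm_num : (0:ℝ) < 1/4) hq
  linarith

/-- if `b i = 0` at a global min, then `D i ≤ ‖y‖²`. -/
lemma lemA {y : Fin n → ℝ} (hmin : ∀ z, fD D b y ≤ fD D b z)
    (hy : IsStat D b y) (i : Fin n) (hbi : b i = 0) :
    D i ≤ ∑ j, y j * y j := by
  have h := hy i
  rw [hbi, add_zero] at h
  have h' : ((∑ j, y j * y j) - D i) * y i = 0 := by linear_combination h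
  rcases mul_eq_zero.mp h' with h1 | h2
  · linarith [h1]
  · exact lemA0 D b hmin hy i h2

end core2

section core3
variable {n : ℕ} (D b : Fin n → ℝ)

lemma sum_bump2 (g : Fin n → ℝ) {i j : Fin n} (hij : i ≠ j) (c1 c2 : ℝ) :
    ∑ k, (g k + ((if k = i then c1 else 0) + (if k = j then c2 else 0)))
      = (∑ k, g k) + (c1 + c2) := by
  rw [Finset.sum_add_distrib, Finset.sum_add_distrib]
  simp [Finset.sum_ite_eq']

/-- two indices with equal `D` value: `D i ≤ ‖y‖²`. -/
lemma lemB {y : Fin n → ℝ} (hmin : ∀ z, fD D b y ≤ fD D b z)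
    (hy : IsStat D b y) {i j : Fin n} (hij : i ≠ j) (hDij : D i = D j) :
    D i ≤ ∑ k, y k * y k := by
  by_cases hyi : y i = 0
  · exact lemA0 D b hmin hy i hyi
  by_cases hyj : y j = 0
  · rw [hDij]; exact lemA0 D b hmin hy j hyj
  set L := ∑ k, y k * y k with hL
  set α := y j with hα
  set β := -y i with hβ
  have hρ : 0 < α^2 + β^2 := by
    have : β ≠ 0 := by simp [hβ, hyi]
    positivity
  set ρ := α^2 + β^2 with hρdef
  set z : ℝ → Fin n → ℝ :=
    fun t k => y k + ((if k = i then t*α else 0) + (if k = j then t*β else 0)) with hz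
  have horth : α * y i + β * y j = 0 := by rw [hα, hβ]; ring
  have s1 : ∀ t, ∑ k, z t k * z t k = L + ρ * t^2 := by
    intro t
    have hpt : ∀ k, z t k * z t k
        = y k * y k + ((if k = i then 2*(y i)*(t*α) + (t*α)^2 else 0)
          + (if k = j then 2*(y j)*(t*β) + (t*β)^2 else 0)) := by
      intro k
      by_cases h1 : k = i
      · have h2 : k ≠ j := by rw [h1]; exact hij
        simp [hz, h1, h2, hij]; try ring
      · by_cases h2 : k = j
        · simp [hz, h1, h2, Ne.symm hij]; try ring
        · simp [hz, h1, h2]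
    rw [Finset.sum_congr rfl fun k _ => hpt k, sum_bump2 _ hij]
    have : 2*(y i)*(t*α) + (t*α)^2 + (2*(y j)*(t*β) + (t*β)^2)
        = 2*t*(α * y i + β * y j) + ρ * t^2 := by rw [hρdef]; ring
    rw [this, horth]; ring
  have s2 : ∀ t, ∑ k, (L - D k) * (z t k - y k)^2 = (L - D i) * ρ * t^2 := by
    intro t
    have hpt : ∀ k, (L - D k) * (z t k - y k)^2
        = 0 + ((if k = i then (L - D i) * (t*α)^2 else 0)
          + (if k = j then (L - D i) * (t*β)^2 else 0)) := by
      intro k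
      by_cases h1 : k = i
      · have h2 : k ≠ j := by rw [h1]; exact hij
        simp [hz, h1, h2, hij]; try ring
      · by_cases h2 : k = j
        · simp [hz, h1, h2, hDij, Ne.symm hij]; try ring
        · simp [hz, h1, h2]
    rw [Finset.sum_congr rfl fun k _ => hpt k, sum_bump2 _ hij]
    simp only [Finset.sum_const_zero, zero_add]
    rw [hρdef]; ring
  have hq : ∀ t : ℝ, 0 ≤ ((L - D i) * ρ / 2) * t^2 + (ρ^2/4) * t^4 := by
    intro t
    have hk := key_id D b hy (z t)
    rw [s1 t, s2 t, ← hL] at hk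
    nlinarith [hk, hmin (z t)]
  have := quad_coeff_nonneg (by positivity : (0:ℝ) < ρ^2/4) hq
  nlinarith [this, hρ]

/-- comparison of two stationary points, one a global min. -/
lemma lemC {y z : Fin n → ℝ} (hmin : ∀ w, fD D b y ≤ fD D b w)
    (hy : IsStat D b y) (hz : IsStat D b z) :
    (∑ k, z k * z k) ≤ ∑ k, y k * y k := by
  set L := ∑ k, y k * y k with hL
  set Mu := ∑ k, z k * z k with hMu
  set A := ∑ k, (L - D k) * (z k - y k)^2 with hA
  set B := ∑ k, (Mu - D k) * (y k - z k)^2 with hB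
  set H := ∑ k, (z k - y k)^2 with hH
  have k1 := key_id D b hy z
  rw [← hL, ← hMu, ← hA] at k1
  have k2 := key_id D b hz y
  rw [← hL, ← hMu, ← hB] at k2
  have hBA : B = A + (Mu - L) * H := by
    rw [hB, hA, hH, Finset.mul_sum, ← Finset.sum_add_distrib]
    exact Finset.sum_congr rfl fun k _ => by ring
  have hfz : fD D b y ≤ fD D b z := hmin z
  by_contra hcon
  push_neg at hcon
  -- hcon : L < Mu
  have hsum : (1/2) * (Mu - L)^2 + (1/2) * (A + B) = 0 := by nlinarith [k1, k2]
  have hk2' : (1/4) * (L - Mu)^2 + (1/2) * B ≤ 0 := by linarith [k2, hfz]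
  have hHnn : 0 ≤ H := Finset.sum_nonneg fun k _ => sq_nonneg _
  have hH0 : H = 0 := by nlinarith [hsum, hk2', hBA, hHnn, hcon]
  have hzy : ∀ k, z k = y k := by
    have := (Finset.sum_eq_zero_iff_of_nonneg
      (fun k _ => sq_nonneg (z k - y k))).mp hH0
    intro k
    have hk := this k (Finset.mem_univ k)
    have := pow_eq_zero_iff (n := 2) (by norm_num) |>.mp hk
    linarith [this]
  have : Mu = L := by
    rw [hMu, hL]
    exact Finset.sum_congr rfl fun k _ => by rw [hzy k]
  linarith

end core3

section eig
variable {n : ℕ} (D b : Fin n → ℝ)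

lemma mmat_rows (v : Fin n ⊕ Fin n ⊕ Unit → ℝ) (μ : ℝ)
    (hv : Mmat D b *ᵥ v = μ • v) :
    (∀ i, D i * v (Sum.inl i) - b i * v (Sum.inr (Sum.inl i)) = μ * v (Sum.inl i)) ∧
    (∀ i, D i * v (Sum.inr (Sum.inl i)) - b i * v (Sum.inr (Sum.inr ())) = μ * v (Sum.inr (Sum.inl i))) ∧
    (∑ i, v (Sum.inl i)) = μ * v (Sum.inr (Sum.inr ())) := by
  refine ⟨fun i => ?_, fun i => ?_, ?_⟩
  · have h := congrFun hv (Sum.inl i)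
    simp [Mmat, mulVec, dotProduct, Fintype.sum_sum_type, ite_mul,
      Finset.sum_ite_eq, Finset.mem_univ] at h
    linarith [h]
  · have h := congrFun hv (Sum.inr (Sum.inl i))
    simp [Mmat, mulVec, dotProduct, Fintype.sum_sum_type, ite_mul,
      Finset.sum_ite_eq, Finset.mem_univ] at h
    linarith [h]
  · have h := congrFun hv (Sum.inr (Sum.inr ()))
    simp [Mmat, mulVec, dotProduct, Fintype.sum_sum_type] at h
    linarith [h]

lemma exists_eigvec {y : Fin n → ℝ} (hy : IsStat D b y) :
    ∃ v : Fin n ⊕ Fin n ⊕ Unit → ℝ, v ≠ 0 ∧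
      Mmat D b *ᵥ v = (∑ i, y i * y i) • v := by
  set L := ∑ i, y i * y i with hL
  refine ⟨Sum.elim (fun i => y i * y i) (Sum.elim y fun _ => 1), ?_, ?_⟩
  · intro h
    have := congrFun h (Sum.inr (Sum.inr ()))
    simp at this
  · funext r
    rcases r with i | i | u
    · simp [Mmat, mulVec, dotProduct, Fintype.sum_sum_type, ite_mul,
        Finset.sum_ite_eq, Finset.mem_univ]
      linear_combination (-(y i)) * hy i
    · simp [Mmat, mulVec, dotProduct, Fintype.sum_sum_type, ite_mul,
        Finset.sum_ite_eq, Finset.mem_univ]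
      linear_combination -(hy i)
    · simp [Mmat, mulVec, dotProduct, Fintype.sum_sum_type, ← hL]

lemma eig_le {y : Fin n → ℝ} (hmin : ∀ z, fD D b y ≤ fD D b z)
    (hy : IsStat D b y) {μ : ℝ}
    (hμ : ∃ v : Fin n ⊕ Fin n ⊕ Unit → ℝ, v ≠ 0 ∧ Mmat D b *ᵥ v = μ • v) :
    μ ≤ ∑ i, y i * y i := by
  obtain ⟨v, hv0, hv⟩ := hμ
  obtain ⟨E1, E2, E3⟩ := mmat_rows D b v μ hv
  set t := v (Sum.inr (Sum.inr ())) with hts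
  by_cases ht : t = 0
  · by_cases hw : ∃ i, v (Sum.inr (Sum.inl i)) ≠ 0
    · obtain ⟨i, hwi⟩ := hw
      have hDi : D i = μ := by
        have := E2 i
        rw [ht] at this
        have h2 : (D i - μ) * v (Sum.inr (Sum.inl i)) = 0 := by linarith
        rcases mul_eq_zero.mp h2 with h | h
        · linarith
        · exact absurd h hwi
      have hbi : b i = 0 := by
        have := E1 i
        rw [hDi] at this
        have h2 : b i * v (Sum.inr (Sum.inl i)) = 0 := by linarith
        rcases mul_eq_zero.mp h2 with h | h
        · exact h
        · exact absurd h hwi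
      rw [← hDi]
      exact lemA D b hmin hy i hbi
    · push_neg at hw
      have hu : ∃ i, v (Sum.inl i) ≠ 0 := by
        by_contra hc
        push_neg at hc
        apply hv0
        funext r
        rcases r with i | i | u
        · exact hc i
        · exact hw i
        · exact ht
      obtain ⟨i, hui⟩ := hu
      have hDi : D i = μ := by
        have := E1 i
        rw [hw i] at this
        have h2 : (D i - μ) * v (Sum.inl i) = 0 := by linarith
        rcases mul_eq_zero.mp h2 with h | h
        · linarith
        · exact absurd h hui
      have hsum0 : ∑ k, v (Sum.inl k) = 0 := by
        rw [E3, ht, mul_zero]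
      have hj : ∃ j, j ≠ i ∧ v (Sum.inl j) ≠ 0 := by
        by_contra hc
        push_neg at hc
        have : ∑ k, v (Sum.inl k) = v (Sum.inl i) :=
          Finset.sum_eq_single i (fun k _ hk => hc k hk) (fun h => absurd (Finset.mem_univ i) h)
        rw [hsum0] at this
        exact hui this.symm
      obtain ⟨j, hji, huj⟩ := hj
      have hDj : D j = μ := by
        have := E1 j
        rw [hw j] at this
        have h2 : (D j - μ) * v (Sum.inl j) = 0 := by linarith
        rcases mul_eq_zero.mp h2 with h | h
        · linarith
        · exact absurd h huj
      rw [← hDi]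
      exact lemB D b hmin hy (Ne.symm hji) (hDi.trans hDj.symm)
  · by_cases hS : ∃ i, D i = μ
    · obtain ⟨i, hDi⟩ := hS
      have hbi : b i = 0 := by
        have := E2 i
        rw [hDi] at this
        have h2 : b i * t = 0 := by linarith
        rcases mul_eq_zero.mp h2 with h | h
        · exact h
        · exact absurd h ht
      rw [← hDi]
      exact lemA D b hmin hy i hbi
    · push_neg at hS
      set z : Fin n → ℝ := fun i => v (Sum.inr (Sum.inl i)) / t with hzdef
      have hzi : ∀ i, (D i - μ) * z i = b i := by
        intro i
        have := E2 i
        rw [hzdef]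
        field_simp
        linarith
      have hui : ∀ i, v (Sum.inl i) = t * (z i * z i) := by
        intro i
        have h1 := E1 i
        have h2 : (D i - μ) * v (Sum.inl i) = b i * v (Sum.inr (Sum.inl i)) := by linarith
        have h3 : v (Sum.inr (Sum.inl i)) = t * z i := by
          rw [hzdef]; field_simp
        rw [h3, ← hzi i] at h2
        have h4 : (D i - μ) ≠ 0 := sub_ne_zero.mpr (hS i)
        have := mul_left_cancel₀ h4 (by linarith [h2] : (D i - μ) * v (Sum.inl i) = (D i - μ) * (t * (z i * z i)))
        exact this
      have hzz : ∑ i, z i * z i = μ := by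
        have : ∑ i, v (Sum.inl i) = t * ∑ i, z i * z i := by
          rw [Finset.mul_sum]
          exact Finset.sum_congr rfl fun i _ => hui i
        rw [this] at E3
        have := mul_left_cancel₀ ht (by linarith [E3] : t * (∑ i, z i * z i) = t * μ)
        exact this
      have hzstat : IsStat D b z := by
        intro i
        rw [hzz]
        have := hzi i
        linarith
      have := lemC D b hmin hy hzstat
      rw [hzz] at this
      exact this

end eig

section final
variable {n : ℕ} (D b : Fin n → ℝ)

lemma eig_iff_root (μ : ℝ) :
    (∃ v : Fin n ⊕ Fin n ⊕ Unit → ℝ, v ≠ 0 ∧ Mmat D b *ᵥ v = μ • v)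
      ↔ (Mmat D b).charpoly.IsRoot μ := by
  classical
  have h1 : ∀ v : Fin n ⊕ Fin n ⊕ Unit → ℝ,
      (Mmat D b *ᵥ v = μ • v) ↔ (μ • (1:Matrix _ _ ℝ) - Mmat D b) *ᵥ v = 0 := by
    intro v
    rw [sub_mulVec, smul_mulVec, one_mulVec, sub_eq_zero]
    exact eq_comm
  have h3 : (charmatrix (Mmat D b)).map (Polynomial.eval μ)
      = μ • (1:Matrix (Fin n ⊕ Fin n ⊕ Unit) (Fin n ⊕ Fin n ⊕ Unit) ℝ) - Mmat D b := by
    ext i j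
    by_cases h : i = j
    · subst h
      simp [charmatrix_apply_eq, Matrix.map_apply, Matrix.one_apply_eq]
    · simp [charmatrix_apply_ne _ _ _ h, Matrix.map_apply, Matrix.one_apply_ne h]
  have h2 : (Mmat D b).charpoly.eval μ
      = (μ • (1:Matrix (Fin n ⊕ Fin n ⊕ Unit) (Fin n ⊕ Fin n ⊕ Unit) ℝ) - Mmat D b).det := by
    rw [Matrix.charpoly, ← h3]
    exact RingHom.map_det (Polynomial.evalRingHom μ) (charmatrix (Mmat D b))
  constructor
  · rintro ⟨v, hv0, hv⟩
    have := Matrix.exists_mulVec_eq_zero_iff.mp ⟨v, hv0, (h1 v).mp hv⟩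
    rw [Polynomial.IsRoot, h2]
    exact this
  · intro h
    rw [Polynomial.IsRoot, h2] at h
    obtain ⟨v, hv0, hv⟩ := Matrix.exists_mulVec_eq_zero_iff.mpr h
    exact ⟨v, hv0, (h1 v).mpr hv⟩

lemma charpoly_odd : Odd (Mmat D b).charpoly.natDegree := by
  rw [Matrix.charpoly_natDegree_eq_dim]
  have : Fintype.card (Fin n ⊕ Fin n ⊕ Unit) = 2*n+1 := by simp; ring
  rw [this]
  exact odd_two_mul_add_one n

theorem stmt9 {n : ℕ} (hn : 0 < n) (D b : Fin n → ℝ) (hD : Antitone D) :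
    ∃ lmax : ℝ,
      (∃ v : Fin n ⊕ Fin n ⊕ Unit → ℝ, v ≠ 0 ∧ Mmat D b *ᵥ v = lmax • v) ∧
      (∀ mu : ℝ,
        (∃ v : Fin n ⊕ Fin n ⊕ Unit → ℝ, v ≠ 0 ∧ Mmat D b *ᵥ v = mu • v) → mu ≤ lmax) ∧
      ∀ y : Fin n → ℝ, (∀ z : Fin n → ℝ, fD D b y ≤ fD D b z) → y ⬝ᵥ y = lmax := by
  classical
  set E := {μ : ℝ | ∃ v : Fin n ⊕ Fin n ⊕ Unit → ℝ, v ≠ 0 ∧ Mmat D b *ᵥ v = μ • v} with hE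
  have hroot : ∀ μ, μ ∈ E ↔ (Mmat D b).charpoly.IsRoot μ := fun μ => eig_iff_root D b μ
  have hfin : E.Finite :=
    (Polynomial.finite_setOf_isRoot ((Matrix.charpoly_monic (Mmat D b)).ne_zero)).subset
      (fun μ hμ => (hroot μ).mp hμ)
  have hne : E.Nonempty := by
    obtain ⟨x, hx⟩ := odd_root (Matrix.charpoly_monic (Mmat D b)) (charpoly_odd D b)
    exact ⟨x, (hroot x).mpr hx⟩
  have hne' : hfin.toFinset.Nonempty := by
    rw [Set.Finite.toFinset_nonempty]; exact hne
  set lmax := hfin.toFinset.max' hne' with hlmax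
  have hlmem : lmax ∈ E := by
    have := hfin.toFinset.max'_mem hne'
    rwa [Set.Finite.mem_toFinset] at this
  refine ⟨lmax, hlmem, ?_, ?_⟩
  · intro mu hmu
    exact Finset.le_max' _ mu ((Set.Finite.mem_toFinset hfin).mpr hmu)
  · intro y hminy
    have hstat := stat_of_min D b hminy
    have hin : (∑ i, y i * y i) ∈ E := exists_eigvec D b hstat
    have h1 : (∑ i, y i * y i) ≤ lmax :=
      Finset.le_max' _ _ ((Set.Finite.mem_toFinset hfin).mpr hin)
    have h2 : lmax ≤ ∑ i, y i * y i := eig_le D b hminy hstat hlmem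
    have hdot : y ⬝ᵥ y = ∑ i, y i * y i := rfl
    rw [hdot]
    exact le_antisymm h1 h2

end final
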